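/- Let x_1 < ... < x_n and y_1 < ... < y_n be real numbers. Then det(exp(x_i y_j))_{i,j=1}^n > 0. -/

import Mathlib

open Finset

/-- A nontrivial exponential sum with distinct exponents cannot vanish at `n`
strictly increasing points. -/
lemma expsum_zero : ∀ (n : ℕ) (c μ : Fin n → ℝ), StrictMono μ → ∀ ξ : Fin n → ℝ,
    StrictMono ξ → (∀ i, ∑ j, c j * Real.exp (μ j * ξ i) = 0) → ∀ j, c j = 0 := by
  intro n
  induction n with
  | zero => intro c μ _ ξ _ _ j; exact j.elim0
  | succ n ih =>
    intro c μ hμ ξ hξ hz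
    set g : ℝ → ℝ := fun t => ∑ j, c j * Real.exp ((μ j - μ 0) * t) with hg
    have hg0 : ∀ i, g (ξ i) = 0 := by
      intro i
      have : g (ξ i) = (∑ j, c j * Real.exp (μ j * ξ i)) / Real.exp (μ 0 * ξ i) := by
        rw [Finset.sum_div]
        refine Finset.sum_congr rfl fun j _ => ?_
        rw [sub_mul, Real.exp_sub, mul_div_assoc]
      rw [this, hz i, zero_div]
    have hasd : ∀ t : ℝ, HasDerivAt g
        (∑ j, c j * (Real.exp ((μ j - μ 0) * t) * (μ j - μ 0))) t := by
      intro t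
      refine HasDerivAt.fun_sum fun j _ => ?_
      have h1 : HasDerivAt (fun s : ℝ => (μ j - μ 0) * s) (μ j - μ 0) t := by
        simpa using (hasDerivAt_id t).const_mul (μ j - μ 0)
      exact h1.exp.const_mul (c j)
    -- Rolle between consecutive zeros
    have rolle : ∀ i : Fin n, ∃ η, ξ i.castSucc < η ∧ η < ξ i.succ ∧ deriv g η = 0 := by
      intro i
      have hab : ξ i.castSucc < ξ i.succ := hξ (Fin.castSucc_lt_succ : i.castSucc < i.succ)
      have hcont : ContinuousOn g (Set.Icc (ξ i.castSucc) (ξ i.succ)) :=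
        fun t _ => ((hasd t).continuousAt).continuousWithinAt
      have heq : g (ξ i.castSucc) = g (ξ i.succ) := by rw [hg0, hg0]
      obtain ⟨η, hη, hη0⟩ := exists_deriv_eq_zero hab hcont heq
      exact ⟨η, hη.1, hη.2, hη0⟩
    choose η hη1 hη2 hη0 using rolle
    have hηmono : StrictMono η := by
      intro i k hik
      have h1 : i.succ ≤ k.castSucc := (Fin.castSucc_lt_iff_succ_le).mp
        (by exact_mod_cast Fin.castSucc_lt_castSucc_iff.mpr hik)
      calc η i < ξ i.succ := hη2 i
        _ ≤ ξ k.castSucc := hξ.monotone h1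
        _ < η k := hη1 k
    have hderiv : ∀ i : Fin n,
        ∑ j, c j * (Real.exp ((μ j - μ 0) * η i) * (μ j - μ 0)) = 0 := by
      intro i
      rw [← (hasd (η i)).deriv]
      exact hη0 i
    have hsucc : ∀ i : Fin n,
        ∑ j : Fin n, (c j.succ * (μ j.succ - μ 0)) *
          Real.exp ((μ j.succ - μ 0) * η i) = 0 := by
      intro i
      have := hderiv i
      rw [Fin.sum_univ_succ] at this
      simp only [sub_self, zero_mul, mul_zero, zero_add] at this
      calc ∑ j : Fin n, (c j.succ * (μ j.succ - μ 0)) *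
            Real.exp ((μ j.succ - μ 0) * η i)
          = ∑ j : Fin n, c j.succ * (Real.exp ((μ j.succ - μ 0) * η i) *
            (μ j.succ - μ 0)) := Finset.sum_congr rfl fun j _ => by ring
        _ = 0 := this
    have hμ' : StrictMono fun j : Fin n => μ j.succ - μ 0 := by
      intro i k hik
      simpa using hμ (Fin.succ_lt_succ_iff.mpr hik)
    have hc' : ∀ j : Fin n, c j.succ * (μ j.succ - μ 0) = 0 :=
      ih (fun j => c j.succ * (μ j.succ - μ 0)) _ hμ' η hηmono hsucc
    have hcsucc : ∀ j : Fin n, c j.succ = 0 := by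
      intro j
      have hpos : 0 < μ j.succ - μ 0 := sub_pos.mpr (hμ (Fin.succ_pos j))
      have := hc' j
      rcases mul_eq_zero.mp this with h | h
      · exact h
      · exact absurd h hpos.ne'
    have hc0 : c 0 = 0 := by
      have := hz 0
      rw [Fin.sum_univ_succ] at this
      simp only [hcsucc, zero_mul, Finset.sum_const_zero, add_zero] at this
      rcases mul_eq_zero.mp this with h | h
      · exact h
      · exact absurd h (Real.exp_ne_zero _)
    intro j
    refine Fin.cases hc0 hcsucc j

/-- The exponential kernel matrix is nonsingular for strictly increasing nodes. -/
lemma expdet_ne_zero (n : ℕ) (x y : Fin n → ℝ) (hx : StrictMono x) (hy : StrictMono y) :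
    Matrix.det (Matrix.of fun i j : Fin n => Real.exp (x i * y j)) ≠ 0 := by
  intro hdet
  obtain ⟨v, hv, hMv⟩ := (Matrix.exists_mulVec_eq_zero_iff).mpr hdet
  have hz : ∀ i, ∑ j, v j * Real.exp (y j * x i) = 0 := by
    intro i
    have := congrFun hMv i
    simp only [Matrix.mulVec, dotProduct, Matrix.of_apply, Pi.zero_apply] at this
    calc ∑ j, v j * Real.exp (y j * x i)
        = ∑ j, Real.exp (x i * y j) * v j :=
          Finset.sum_congr rfl fun j _ => by rw [mul_comm (x i) (y j)]; ring
      _ = 0 := this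
  exact hv (funext (expsum_zero n v y hy x hx hz))

theorem stmt13 (n : ℕ) (x y : Fin n → ℝ) (hx : StrictMono x) (hy : StrictMono y) :
    0 < Matrix.det (Matrix.of fun i j : Fin n => Real.exp (x i * y j)) := by
  -- Interpolate `y` to the model case `yⱼ = j` within strictly monotone tuples.
  set z : ℝ → Fin n → ℝ := fun t j => (1 - t) * y j + t * (j : ℕ) with hzdef
  have hzmono : ∀ t ∈ Set.Icc (0 : ℝ) 1, StrictMono (z t) := by
    intro t ht i k hik
    have h1 : (1 - t) * y i ≤ (1 - t) * y k :=
      mul_le_mul_of_nonneg_left (hy hik).le (by linarith [ht.2])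
    have h2 : t * (i : ℕ) ≤ t * (k : ℕ) :=
      mul_le_mul_of_nonneg_left (by exact_mod_cast hik.le) ht.1
    rcases eq_or_lt_of_le ht.1 with h0 | h0
    · have : (1 - t) * y i < (1 - t) * y k := by
        rw [← h0]; simpa using hy hik
      simp only [hzdef]; linarith
    · have hik' : (i : ℕ) < (k : ℕ) := hik
      have : t * (i : ℕ) < t * (k : ℕ) := by
        apply mul_lt_mul_of_pos_left _ h0
        exact_mod_cast hik'
      simp only [hzdef]; linarith
  set F : ℝ → ℝ := fun t =>
    Matrix.det (Matrix.of fun i j : Fin n => Real.exp (x i * z t j)) with hF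
  have hFcont : Continuous F := by
    apply Continuous.matrix_det
    apply continuous_matrix
    intro i j
    simp only [Matrix.of_apply, hzdef]
    exact (Real.continuous_exp.comp (by continuity))
  have hFne : ∀ t ∈ Set.Icc (0 : ℝ) 1, F t ≠ 0 := fun t ht =>
    expdet_ne_zero n x (z t) hx (hzmono t ht)
  have hF1 : 0 < F 1 := by
    have hz1 : ∀ j : Fin n, z 1 j = ((j : ℕ) : ℝ) := by
      intro j; simp [hzdef]
    have : F 1 = Matrix.det (Matrix.vandermonde fun i : Fin n => Real.exp (x i)) := by
      simp only [hF]
      congr 1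
      ext i j
      rw [Matrix.of_apply, hz1, Matrix.vandermonde_apply, ← Real.exp_nat_mul, mul_comm]
    rw [this, Matrix.det_vandermonde]
    apply Finset.prod_pos
    intro i _
    apply Finset.prod_pos
    intro j hj
    have : i < j := Finset.mem_Ioi.mp hj
    exact sub_pos.mpr (Real.exp_lt_exp.mpr (hx this))
  have hF0 : F 0 ≠ 0 := hFne 0 (by constructor <;> norm_num)
  have hF0pos : 0 < F 0 := by
    by_contra h
    push_neg at h
    have hlt : F 0 < 0 := lt_of_le_of_ne h hF0
    have : (0 : ℝ) ∈ Set.Icc (F 0) (F 1) := ⟨hlt.le, hF1.le⟩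
    obtain ⟨t, ht, hFt⟩ := intermediate_value_Icc (by norm_num : (0:ℝ) ≤ 1)
      (hFcont.continuousOn) this
    exact hFne t ht hFt
  have hz0 : z 0 = y := by funext j; simp [hzdef]
  have : F 0 = Matrix.det (Matrix.of fun i j : Fin n => Real.exp (x i * y j)) := by
    simp only [hF, hz0]
  linarith [hF0pos, this ▸ hF0pos]
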